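/- Let W₁, W₂ : ℝ → Matrix (Fin n) (Fin n) ℝ be differentiable and X : ℝ → Matrix (Fin n) (Fin n) ℝ, and suppose W₁'(t) = −W₂(t)ᵀ G(t) and W₂'(t) = −G(t) W₁(t)ᵀ with G(t) := −W₂(t) W₁(t) X(t) for all t. Then d/dt tr(W₁(t) W₁(t)ᵀ) = 2 · tr( W₂(t) W₁(t) X(t) W₁(t)ᵀ W₂(t)ᵀ ). Moreover, if at some time t the matrix X(t) is symmetric positive definite and W₂(t)W₁(t) ≠ 0, then this derivative is strictly positive, so the squared Frobenius norm ‖W₁(t)‖_F² = tr(W₁(t)W₁(t)ᵀ) is strictly increasing at t. -/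

import Mathlib

open Matrix

/-- **Frobenius norm growth along the two-layer contrastive gradient flow.**
If `Ẇ₁ = −W₂ᵀ G` and `Ẇ₂ = −G W₁ᵀ` with `G = −W₂ W₁ X`, then
`d/dt tr(W₁ W₁ᵀ) = 2 tr(W₂ W₁ X W₁ᵀ W₂ᵀ)`; moreover, if at some time `t` the
matrix `X t` is symmetric positive definite and `W₂ t * W₁ t ≠ 0`, this
derivative is strictly positive, so `‖W₁ t‖_F² = tr(W₁ t (W₁ t)ᵀ)` is strictly
increasing at `t`. -/
theorem frobenius_norm_growth (n : ℕ)
    (W₁ W₂ X G : ℝ → Matrix (Fin n) (Fin n) ℝ)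
    (hG : ∀ t, G t = -(W₂ t * W₁ t * X t))
    (hW₁ : ∀ t i j, HasDerivAt (fun s => W₁ s i j) ((-(W₂ t)ᵀ * G t) i j) t)
    (hW₂ : ∀ t i j, HasDerivAt (fun s => W₂ s i j) ((-(G t) * (W₁ t)ᵀ) i j) t) :
    ∀ t,
      HasDerivAt (fun s => Matrix.trace (W₁ s * (W₁ s)ᵀ))
        (2 * Matrix.trace (W₂ t * W₁ t * X t * (W₁ t)ᵀ * (W₂ t)ᵀ)) t ∧
      ((X t).PosDef → W₂ t * W₁ t ≠ 0 →
        0 < 2 * Matrix.trace (W₂ t * W₁ t * X t * (W₁ t)ᵀ * (W₂ t)ᵀ)) := by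
  intro t
  set A := W₂ t
  set B := W₁ t
  set C := X t
  set D : Matrix (Fin n) (Fin n) ℝ := -(W₂ t)ᵀ * G t with hD
  constructor
  · -- derivative part
    have hDval : D = Aᵀ * (A * B * C) := by
      rw [hD, hG]; simp [Matrix.mul_assoc]; rfl
    have hderiv : HasDerivAt
        (fun s => ∑ i, ∑ j, W₁ s i j * W₁ s i j)
        (∑ i, ∑ j, (D i j * B i j + B i j * D i j)) t := by
      apply HasDerivAt.fun_sum
      intro i _
      apply HasDerivAt.fun_sum
      intro j _
      exact (hW₁ t i j).mul (hW₁ t i j)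
    have htr : ∀ s, Matrix.trace (W₁ s * (W₁ s)ᵀ)
        = ∑ i, ∑ j, W₁ s i j * W₁ s i j := by
      intro s
      simp [Matrix.trace, Matrix.diag, Matrix.mul_apply]
    have heq : (∑ i, ∑ j, (D i j * B i j + B i j * D i j))
        = 2 * Matrix.trace (A * B * C * Bᵀ * Aᵀ) := by
      have h1 : Matrix.trace (A * B * C * Bᵀ * Aᵀ) = Matrix.trace (D * Bᵀ) := by
        rw [hDval, Matrix.trace_mul_comm (A * B * C * Bᵀ) Aᵀ]
        simp only [Matrix.mul_assoc]
      have h2 : Matrix.trace (D * Bᵀ) = ∑ i, ∑ j, D i j * B i j := by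
        simp [Matrix.trace, Matrix.diag, Matrix.mul_apply]
      rw [h1, h2, Finset.mul_sum]
      congr 1; funext i
      rw [Finset.mul_sum]
      congr 1; funext j
      ring
    rw [← heq]
    exact hderiv.congr_deriv rfl |>.congr_of_eventuallyEq
      (Filter.Eventually.of_forall fun s => (htr s).symm) |>.congr_deriv rfl
  · -- positivity part
    intro hX hM
    set M := A * B with hMdef
    have key : Matrix.trace (A * B * C * Bᵀ * Aᵀ) = ∑ i, (M i) ⬝ᵥ (C *ᵥ (M i)) := by
      have : A * B * C * Bᵀ * Aᵀ = M * C * Mᵀ := by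
        rw [hMdef, Matrix.transpose_mul, Matrix.mul_assoc (A*B*C), ← Matrix.mul_assoc]
      rw [this]
      simp only [Matrix.trace, Matrix.diag_apply, Matrix.mul_apply, Matrix.mulVec,
        dotProduct, Finset.sum_mul, Finset.mul_sum]
      refine Finset.sum_congr rfl fun i _ => ?_
      rw [Finset.sum_comm]
      exact Finset.sum_congr rfl fun j _ => Finset.sum_congr rfl fun k _ => by rw [Matrix.transpose_apply]; ring
    have hnonneg : ∀ i ∈ Finset.univ, 0 ≤ (M i) ⬝ᵥ (C *ᵥ (M i)) := by
      intro i _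
      have := hX.posSemidef.dotProduct_mulVec_nonneg (M i)
      simpa using this
    have hpos : ∃ i ∈ Finset.univ, 0 < (M i) ⬝ᵥ (C *ᵥ (M i)) := by
      have : ∃ i, M i ≠ 0 := by
        by_contra h
        push_neg at h
        exact hM (by ext i j; simpa using congrFun (h i) j)
      obtain ⟨i, hi⟩ := this
      refine ⟨i, Finset.mem_univ i, ?_⟩
      have := hX.dotProduct_mulVec_pos hi
      simpa using this
    have : 0 < ∑ i, (M i) ⬝ᵥ (C *ᵥ (M i)) := Finset.sum_pos' hnonneg hpos
    rw [key]
    linarith
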